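/- Let $\omega\colon B_k\to S_n$ be a homomorphism with $\widehat\sigma_i=\omega(\sigma_i)$. For every $2\le i\le k-2$ and every cycle $D$ in the cycle decomposition of $\widehat\sigma_i$, one has $|\mathrm{supp}(D)\cap\mathrm{supp}(\widehat\sigma_{i+1})| \ge \tfrac12|\mathrm{supp}(D)|$; consequently $|\mathrm{supp}(\widehat\sigma_i)\cap\mathrm{supp}(\widehat\sigma_{i+1})| \ge \tfrac12|\mathrm{supp}(\widehat\sigma_i)|$. -/

import Mathlib

lemma half_aux {n : ℕ} (a b : Equiv.Perm (Fin n))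
    (hkey : ∀ x, a x ≠ x → b x = x → b (a x) ≠ a x)
    (T : Finset (Fin n)) (hT : T ⊆ a.support) (hTa : ∀ x ∈ T, a x ∈ T) :
    T.card ≤ 2 * (T ∩ b.support).card := by
  have hsplit : (T ∩ b.support).card + (T \ b.support).card = T.card :=
    Finset.card_inter_add_card_sdiff T b.support
  have hle : (T \ b.support).card ≤ (T ∩ b.support).card := by
    apply Finset.card_le_card_of_injOn (fun x => a x)
    · intro x hx
      simp only [Finset.mem_coe, Finset.mem_sdiff] at hx
      obtain ⟨hxT, hxb⟩ := hx
      have hax : a x ≠ x := by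
        have := hT hxT; rwa [Equiv.Perm.mem_support] at this
      have hbx : b x = x := by
        by_contra h
        exact hxb (Equiv.Perm.mem_support.mpr h)
      refine Finset.mem_inter.mpr ⟨hTa x hxT, Equiv.Perm.mem_support.mpr ?_⟩
      exact hkey x hax hbx
    · intro x _ y _ h
      exact a.injective h
  omega

theorem cycle_supp_half (k n : ℕ)
    (s : ℕ → Equiv.Perm (Fin n))
    (hbraid : ∀ i, 1 ≤ i → i + 1 ≤ k - 1 →
      s i * s (i + 1) * s i = s (i + 1) * s i * s (i + 1))
    (hcomm : ∀ i j, 1 ≤ i → j ≤ k - 1 → i + 2 ≤ j → s i * s j = s j * s i)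
    (i : ℕ) (h1 : 2 ≤ i) (h2 : i ≤ k - 2) :
    (∀ D ∈ (s i).cycleFactorsFinset,
      D.support.card ≤ 2 * (D.support ∩ (s (i + 1)).support).card) ∧
    (s i).support.card ≤ 2 * ((s i).support ∩ (s (i + 1)).support).card := by
  have hk : 4 ≤ k := by omega
  have hb := hbraid i (by omega) (by omega)
  set a := s i
  set b := s (i + 1)
  have hkey : ∀ x, a x ≠ x → b x = x → b (a x) ≠ a x := by
    intro x hax hbx hcontra
    apply hax
    have h1 : (a * b * a) x = (b * a * b) x := by rw [hb]
    simp only [Equiv.Perm.mul_apply, hbx, hcontra] at h1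
    -- h1 : a (a x) = a x
    exact a.injective h1
  constructor
  · intro D hD
    have hDs : D.support ⊆ a.support := Equiv.Perm.mem_cycleFactorsFinset_support_le hD
    have hDeq : ∀ x ∈ D.support, D x = a x :=
      ((Equiv.Perm.mem_cycleFactorsFinset_iff).mp hD).2
    refine half_aux a b hkey D.support hDs ?_
    intro x hx
    rw [← hDeq x hx]
    exact Equiv.Perm.apply_mem_support.mpr hx
  · exact half_aux a b hkey a.support (le_refl _)
      (fun x hx => Equiv.Perm.apply_mem_support.mpr hx)
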